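/- Let f ∈ L^1[0,∞). For λ in the closed upper half-plane define Ψ(λ) = sup over x, s ≥ 0 of |∫ from min(s,x) to max(s,x) of f(t) e^{iλ|x-t|} dt|. Then Ψ is uniformly continuous on the closed upper half-plane, and Ψ(λ) → 0 as |λ| → ∞ within the closed upper half-plane. -/

import Mathlib

open MeasureTheory Set Complex


noncomputable def Jint (f : ℝ → ℂ) (s x : ℝ) (lam : ℂ) : ℂ :=
  ∫ t in min s x..max s x, f t * Complex.exp (Complex.I * lam * |x - t|)

lemma norm_exp_le_one {lam : ℂ} (hl : 0 ≤ lam.im) {r : ℝ} (hr : 0 ≤ r) :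
    ‖Complex.exp (Complex.I * lam * r)‖ ≤ 1 := by
  rw [Complex.norm_exp]
  have : (Complex.I * lam * r).re = -lam.im * r := by
    simp [Complex.mul_re, Complex.mul_im]
  rw [this]
  exact Real.exp_le_one_iff.mpr (mul_nonpos_of_nonpos_of_nonneg (by linarith) hr)

lemma II_helper {g : ℝ → ℂ} (hg : IntegrableOn g (Ici 0)) {a b : ℝ} (ha : 0 ≤ a)
    (hab : a ≤ b) {φ : ℝ → ℂ} (hφ : Continuous φ) :
    IntervalIntegrable (fun t => g t * φ t) MeasureTheory.volume a b := by
  rw [intervalIntegrable_iff_integrableOn_Ioc_of_le hab]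
  have h1 : IntegrableOn g (Icc a b) := hg.mono_set (fun t ht => le_trans ha ht.1)
  exact (h1.mul_continuousOn hφ.continuousOn isCompact_Icc).mono_set Ioc_subset_Icc_self

lemma contE' (lam : ℂ) (x : ℝ) : Continuous (fun t : ℝ => Complex.exp (Complex.I * lam * (|x - t| : ℝ))) := by
  have : Continuous fun t : ℝ => ((|x - t| : ℝ) : ℂ) := by fun_prop
  exact Complex.continuous_exp.comp (by fun_prop)

lemma Jint_eq_of_le (f : ℝ → ℂ) {s x : ℝ} (h : s ≤ x) (lam : ℂ) :
    Jint f s x lam = ∫ t in s..x, f t * Complex.exp (Complex.I * lam * ((x - t : ℝ) : ℂ)) := by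
  rw [Jint, min_eq_left h, max_eq_right h]
  refine intervalIntegral.integral_congr fun t ht => ?_
  rw [uIcc_of_le h] at ht
  rw [_root_.abs_of_nonneg (by linarith [ht.2] : (0:ℝ) ≤ x - t)]

lemma Jint_eq_of_ge (f : ℝ → ℂ) {s x : ℝ} (h : x ≤ s) (lam : ℂ) :
    Jint f s x lam = ∫ t in x..s, f t * Complex.exp (Complex.I * lam * ((t - x : ℝ) : ℂ)) := by
  rw [Jint, min_eq_right h, max_eq_left h]
  refine intervalIntegral.integral_congr fun t ht => ?_
  rw [uIcc_of_le h] at ht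
  rw [abs_sub_comm, _root_.abs_of_nonneg (by linarith [ht.1] : (0:ℝ) ≤ t - x)]


lemma norm_intv_le {g : ℝ → ℂ} (hg : IntegrableOn g (Ici 0)) {a b : ℝ} (ha : 0 ≤ a)
    (hab : a ≤ b) {φ : ℝ → ℂ} (hφ : Continuous φ) (hφ1 : ∀ t ∈ Ioc a b, ‖φ t‖ ≤ 1) :
    ‖∫ t in a..b, g t * φ t‖ ≤ ∫ t in Ioc a b, ‖g t‖ := by
  rw [intervalIntegral.integral_of_le hab]
  refine (norm_integral_le_integral_norm _).trans ?_
  refine setIntegral_mono_on ?_ ((hg.mono_set (fun t ht => le_trans ha ht.1.le)).norm) measurableSet_Ioc ?_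
  · exact ((intervalIntegrable_iff_integrableOn_Ioc_of_le hab).1 (II_helper hg ha hab hφ)).norm
  · intro t ht
    rw [norm_mul]
    exact mul_le_of_le_one_right (norm_nonneg _) (hφ1 t ht)

lemma tail_mono {f : ℝ → ℂ} (hf1 : IntegrableOn f (Ici 0)) {a b c : ℝ} (hc : 0 ≤ c)
    (h : Ioc a b ⊆ Ici c) : ∫ t in Ioc a b, ‖f t‖ ≤ ∫ t in Ici c, ‖f t‖ :=
  setIntegral_mono_set ((hf1.mono_set (Ici_subset_Ici.mpr hc)).norm)
    (Filter.Eventually.of_forall fun t => norm_nonneg _) (HasSubset.Subset.eventuallyLE h)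

lemma norm_Jint_le {f : ℝ → ℂ} (hf1 : IntegrableOn f (Ici 0)) {s x : ℝ} (hs : 0 ≤ s) (hx : 0 ≤ x)
    {lam : ℂ} (hl : 0 ≤ lam.im) :
    ‖Jint f s x lam‖ ≤ ∫ t in Ioc (min s x) (max s x), ‖f t‖ :=
  norm_intv_le hf1 (le_min hs hx) min_le_max (contE' lam x)
    (fun t _ => norm_exp_le_one hl (abs_nonneg _))

lemma norm_Jint_le_M {f : ℝ → ℂ} (hf1 : IntegrableOn f (Ici 0)) {s x : ℝ} (hs : 0 ≤ s) (hx : 0 ≤ x)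
    {lam : ℂ} (hl : 0 ≤ lam.im) :
    ‖Jint f s x lam‖ ≤ ∫ t in Ici 0, ‖f t‖ :=
  (norm_Jint_le hf1 hs hx hl).trans (tail_mono hf1 le_rfl (fun t ht => le_trans (le_min hs hx) ht.1.le))


lemma contSub (lam : ℂ) (c : ℝ) : Continuous (fun t : ℝ => Complex.exp (Complex.I * lam * ((c - t : ℝ) : ℂ))) := by fun_prop
lemma contSub' (lam : ℂ) (c : ℝ) : Continuous (fun t : ℝ => Complex.exp (Complex.I * lam * ((t - c : ℝ) : ℂ))) := by fun_prop

lemma trunc_key {f : ℝ → ℂ} (hf1 : IntegrableOn f (Ici 0)) {T s x : ℝ} (hT : 0 ≤ T)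
    (hs : 0 ≤ s) (hx : 0 ≤ x) {lam : ℂ} (hl : 0 ≤ lam.im) :
    ‖Jint f s x lam‖ ≤ (∫ t in Ici T, ‖f t‖) + ‖Jint f (min s T) (min x T) lam‖ := by
  set ζ := ∫ t in Ici T, ‖f t‖ with hζdef
  have hζ : 0 ≤ ζ := integral_nonneg fun t => norm_nonneg _
  rcases le_total s x with hsx | hxs
  · -- s ≤ x
    rcases le_total x T with hxT | hTx
    · rw [min_eq_left (hsx.trans hxT), min_eq_left hxT]
      linarith [norm_nonneg (Jint f s x lam)]
    · rcases le_total T s with hTs | hsT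
      · -- T ≤ s ≤ x : everything in tail
        rw [min_eq_right hTs, min_eq_right (hTs.trans hsx)]
        have h1 : ‖Jint f s x lam‖ ≤ ∫ t in Ioc s x, ‖f t‖ := by
          rw [Jint_eq_of_le f hsx lam]
          exact norm_intv_le hf1 hs hsx (contSub lam x)
            (fun t ht => norm_exp_le_one hl (by linarith [ht.2]))
        have h2 : (∫ t in Ioc s x, ‖f t‖) ≤ ζ :=
          tail_mono hf1 hT (fun t ht => le_trans hTs ht.1.le)
        linarith [norm_nonneg (Jint f T T lam)]
      · -- s ≤ T ≤ x
        rw [min_eq_left hsT, min_eq_right hTx]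
        rw [Jint_eq_of_le f hsx lam]
        have i1 : IntervalIntegrable (fun t => f t * Complex.exp (Complex.I * lam * ((x - t : ℝ) : ℂ))) MeasureTheory.volume s T := II_helper hf1 hs hsT (contSub lam x)
        have i2 : IntervalIntegrable (fun t => f t * Complex.exp (Complex.I * lam * ((x - t : ℝ) : ℂ))) MeasureTheory.volume T x := II_helper hf1 hT hTx (contSub lam x)
        rw [← intervalIntegral.integral_add_adjacent_intervals i1 i2]
        have head : (∫ t in s..T, f t * Complex.exp (Complex.I * lam * ((x - t : ℝ) : ℂ)))
            = Complex.exp (Complex.I * lam * ((x - T : ℝ) : ℂ)) * Jint f s T lam := by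
          rw [Jint_eq_of_le f hsT lam, ← intervalIntegral.integral_const_mul]
          refine intervalIntegral.integral_congr fun t _ => ?_
          have hsplit : Complex.exp (Complex.I * lam * ((x - T : ℝ) : ℂ)) *
              Complex.exp (Complex.I * lam * ((T - t : ℝ) : ℂ))
              = Complex.exp (Complex.I * lam * ((x - t : ℝ) : ℂ)) := by
            rw [← Complex.exp_add]
            congr 1
            push_cast
            ring
          rw [← hsplit]
          ring
        have tailb : ‖∫ t in T..x, f t * Complex.exp (Complex.I * lam * ((x - t : ℝ) : ℂ))‖ ≤ ζ := by
          refine (norm_intv_le hf1 hT hTx (contSub lam x)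
            (fun t ht => norm_exp_le_one hl (by linarith [ht.2]))).trans ?_
          exact tail_mono hf1 hT (fun t ht => ht.1.le)
        have headb : ‖(∫ t in s..T, f t * Complex.exp (Complex.I * lam * ((x - t : ℝ) : ℂ)))‖
            ≤ ‖Jint f s T lam‖ := by
          rw [head, norm_mul]
          exact mul_le_of_le_one_left (norm_nonneg _) (norm_exp_le_one hl (by linarith))
        calc ‖_ + _‖ ≤ _ + _ := norm_add_le _ _
          _ ≤ ζ + ‖Jint f s T lam‖ := by linarith
  · -- x ≤ s
    rcases le_total s T with hsT | hTs
    · rw [min_eq_left hsT, min_eq_left (hxs.trans hsT)]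
      linarith [norm_nonneg (Jint f s x lam)]
    · rcases le_total T x with hTx | hxT
      · rw [min_eq_right hTs, min_eq_right hTx]
        have h1 : ‖Jint f s x lam‖ ≤ ∫ t in Ioc x s, ‖f t‖ := by
          rw [Jint_eq_of_ge f hxs lam]
          exact norm_intv_le hf1 hx hxs (contSub' lam x)
            (fun t ht => norm_exp_le_one hl (by linarith [ht.1]))
        have h2 : (∫ t in Ioc x s, ‖f t‖) ≤ ζ :=
          tail_mono hf1 hT (fun t ht => le_trans hTx ht.1.le)
        linarith [norm_nonneg (Jint f T T lam)]
      · -- x ≤ T ≤ s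
        rw [min_eq_right hTs, min_eq_left hxT]
        rw [Jint_eq_of_ge f hxs lam]
        have i1 : IntervalIntegrable (fun t => f t * Complex.exp (Complex.I * lam * ((t - x : ℝ) : ℂ))) MeasureTheory.volume x T := II_helper hf1 hx hxT (contSub' lam x)
        have i2 : IntervalIntegrable (fun t => f t * Complex.exp (Complex.I * lam * ((t - x : ℝ) : ℂ))) MeasureTheory.volume T s := II_helper hf1 hT hTs (contSub' lam x)
        rw [← intervalIntegral.integral_add_adjacent_intervals i1 i2]
        have head : (∫ t in x..T, f t * Complex.exp (Complex.I * lam * ((t - x : ℝ) : ℂ)))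
            = Jint f T x lam := (Jint_eq_of_ge f hxT lam).symm
        have tailb : ‖∫ t in T..s, f t * Complex.exp (Complex.I * lam * ((t - x : ℝ) : ℂ))‖ ≤ ζ := by
          refine (norm_intv_le hf1 hT hTs (contSub' lam x)
            (fun t ht => norm_exp_le_one hl (by linarith [ht.1]))).trans ?_
          exact tail_mono hf1 hT (fun t ht => ht.1.le)
        calc ‖_ + _‖ ≤ _ + _ := norm_add_le _ _
          _ ≤ ζ + ‖Jint f T x lam‖ := by rw [head]; linarith


lemma exp_diff_le {lam mu : ℂ} (hl : 0 ≤ lam.im) (hm : 0 ≤ mu.im) {r : ℝ} (hr : 0 ≤ r) :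
    ‖Complex.exp (Complex.I * lam * r) - Complex.exp (Complex.I * mu * r)‖ ≤ r * dist lam mu := by
  have key : ∀ z ∈ {z : ℂ | 0 ≤ z.im}, HasDerivWithinAt (fun z : ℂ => Complex.exp (Complex.I * z * r))
      (Complex.exp (Complex.I * z * r) * (Complex.I * r)) {z : ℂ | 0 ≤ z.im} z := by
    intro z _
    have h1 : HasDerivAt (fun z : ℂ => Complex.I * z * r) (Complex.I * r) z := by
      simpa using ((hasDerivAt_id z).const_mul Complex.I).mul_const (r : ℂ)
    exact (h1.cexp).hasDerivWithinAt
  have bound : ∀ z ∈ {z : ℂ | 0 ≤ z.im}, ‖Complex.exp (Complex.I * z * r) * (Complex.I * r)‖ ≤ r := by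
    intro z hz
    rw [norm_mul]
    have h2 : ‖Complex.I * (r : ℂ)‖ = r := by
      simp [_root_.abs_of_nonneg hr]
    rw [h2]
    exact mul_le_of_le_one_left hr (norm_exp_le_one hz hr)
  have := Convex.norm_image_sub_le_of_norm_hasDerivWithin_le key bound
    (convex_halfSpace_im_ge 0) (x := mu) (y := lam) hm hl
  simpa [dist_eq_norm] using this


lemma Jdiff {f : ℝ → ℂ} (hf1 : IntegrableOn f (Ici 0)) {T s x : ℝ}
    (hs : s ∈ Icc (0:ℝ) T) (hx : x ∈ Icc (0:ℝ) T) {lam mu : ℂ}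
    (hl : 0 ≤ lam.im) (hm : 0 ≤ mu.im) :
    ‖Jint f s x lam - Jint f s x mu‖ ≤ (∫ t in Ici 0, ‖f t‖) * (T * dist lam mu) := by
  have ha : 0 ≤ min s x := le_min hs.1 hx.1
  have hab : min s x ≤ max s x := min_le_max
  have i1 : IntervalIntegrable (fun t => f t * Complex.exp (Complex.I * lam * (|x - t| : ℝ)))
      MeasureTheory.volume (min s x) (max s x) := II_helper hf1 ha hab (contE' lam x)
  have i2 : IntervalIntegrable (fun t => f t * Complex.exp (Complex.I * mu * (|x - t| : ℝ)))
      MeasureTheory.volume (min s x) (max s x) := II_helper hf1 ha hab (contE' mu x)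
  have hd : Jint f s x lam - Jint f s x mu
      = ∫ t in min s x..max s x,
        f t * (Complex.exp (Complex.I * lam * (|x - t| : ℝ)) - Complex.exp (Complex.I * mu * (|x - t| : ℝ))) := by
    rw [Jint, Jint, ← intervalIntegral.integral_sub i1 i2]
    exact intervalIntegral.integral_congr fun t _ => (mul_sub _ _ _).symm
  rw [hd, intervalIntegral.integral_of_le hab]
  refine (norm_integral_le_integral_norm _).trans ?_
  have key : ∀ t ∈ Ioc (min s x) (max s x),
      ‖f t * (Complex.exp (Complex.I * lam * (|x - t| : ℝ)) - Complex.exp (Complex.I * mu * (|x - t| : ℝ)))‖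
      ≤ ‖f t‖ * (T * dist lam mu) := by
    intro t ht
    rw [norm_mul]
    refine mul_le_mul_of_nonneg_left ?_ (norm_nonneg _)
    refine (exp_diff_le hl hm (abs_nonneg _)).trans ?_
    refine mul_le_mul_of_nonneg_right ?_ dist_nonneg
    have h1 : t ≤ T := ht.2.trans (max_le hs.2 hx.2)
    have h2 : 0 ≤ t := ha.trans ht.1.le
    rw [abs_le]
    constructor <;> linarith [hx.1, hx.2]
  have int1 : IntegrableOn (fun t => ‖f t * (Complex.exp (Complex.I * lam * (|x - t| : ℝ)) - Complex.exp (Complex.I * mu * (|x - t| : ℝ)))‖) (Ioc (min s x) (max s x)) := by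
    have := II_helper hf1 ha hab (φ := fun t => Complex.exp (Complex.I * lam * (|x - t| : ℝ)) - Complex.exp (Complex.I * mu * (|x - t| : ℝ))) ((contE' lam x).sub (contE' mu x))
    exact ((intervalIntegrable_iff_integrableOn_Ioc_of_le hab).1 this).norm
  have int2 : IntegrableOn (fun t => ‖f t‖ * (T * dist lam mu)) (Ioc (min s x) (max s x)) :=
    ((hf1.mono_set (fun t ht => ha.trans ht.1.le)).norm).mul_const _
  refine (setIntegral_mono_on int1 int2 measurableSet_Ioc key).trans ?_
  rw [integral_mul_const]
  refine mul_le_mul_of_nonneg_right ?_ (mul_nonneg (hx.1.trans hx.2) dist_nonneg)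
  exact tail_mono hf1 le_rfl (fun t ht => ha.trans ht.1.le)


lemma osc1 {h h' : ℝ → ℂ} (hd : ∀ t, HasDerivAt h (h' t) t) (hc' : Continuous h')
    {u v : ℝ} (huv : u ≤ v) {lam : ℂ} (hl : 0 ≤ lam.im) (hlam : lam ≠ 0)
    {B C : ℝ} (hB : ∀ t, ‖h t‖ ≤ B) (hC : ∀ t, ‖h' t‖ ≤ C) :
    ‖∫ t in u..v, h t * Complex.exp (Complex.I * lam * ((v - t : ℝ) : ℂ))‖
      ≤ (2 * B + C * (v - u)) / ‖lam‖ := by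
  set c := Complex.I * lam with hc
  have hc0 : c ≠ 0 := mul_ne_zero Complex.I_ne_zero hlam
  set e : ℝ → ℂ := fun t => Complex.exp (Complex.I * lam * ((v - t : ℝ) : ℂ)) with hedef
  set w : ℝ → ℂ := fun t => -c⁻¹ * e t with hwdef
  have hde : ∀ t, HasDerivAt e (e t * (c * (-1))) t := by
    intro t
    have h1 : HasDerivAt (fun t : ℝ => ((v - t : ℝ) : ℂ)) ((-1 : ℝ) : ℂ) t :=
      (((hasDerivAt_id t).const_sub v).ofReal_comp)
    have h2 : HasDerivAt (fun t : ℝ => Complex.I * lam * ((v - t : ℝ) : ℂ)) (c * (-1)) t := by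
      simpa using h1.const_mul c
    exact h2.cexp
  have hdw : ∀ t, HasDerivAt w (e t) t := by
    intro t
    have := (hde t).const_mul (-c⁻¹)
    have heq : -c⁻¹ * (e t * (c * (-1))) = e t := by field_simp
    rw [heq] at this
    exact this
  have hibp := intervalIntegral.integral_mul_deriv_eq_deriv_mul
    (u := h) (u' := h') (v := w) (v' := e)
    (fun t _ => hd t) (fun t _ => hdw t)
    (hc'.intervalIntegrable u v)
    ((Complex.continuous_exp.comp (by fun_prop)).intervalIntegrable u v)
  have hwnorm : ∀ t, t ≤ v → ‖w t‖ ≤ ‖lam‖⁻¹ := by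
    intro t ht
    rw [hwdef]
    simp only [norm_mul, norm_neg, norm_inv]
    have h3 : ‖c‖ = ‖lam‖ := by rw [hc, norm_mul, Complex.norm_I, one_mul]
    rw [h3]
    exact mul_le_of_le_one_right (inv_nonneg.2 (norm_nonneg _)) (norm_exp_le_one hl (by linarith))
  have hB0 : 0 ≤ B := (norm_nonneg _).trans (hB u)
  have hC0 : 0 ≤ C := (norm_nonneg _).trans (hC u)
  have hint : ‖∫ t in u..v, h' t * w t‖ ≤ C * ‖lam‖⁻¹ * (v - u) := by
    have := intervalIntegral.norm_integral_le_of_norm_le_const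
      (C := C * ‖lam‖⁻¹) (f := fun t => h' t * w t) (a := u) (b := v) ?_
    · rwa [_root_.abs_of_nonneg (by linarith : (0:ℝ) ≤ v - u)] at this
    · intro t ht
      rw [Set.uIoc_of_le huv] at ht
      rw [norm_mul]
      exact mul_le_mul (hC t) (hwnorm t ht.2) (norm_nonneg _) hC0
  rw [hibp]
  have h4 : ‖h v * w v - h u * w u - ∫ t in u..v, h' t * w t‖
      ≤ B * ‖lam‖⁻¹ + B * ‖lam‖⁻¹ + C * ‖lam‖⁻¹ * (v - u) := by
    refine (norm_sub_le _ _).trans ?_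
    gcongr
    refine (norm_sub_le _ _).trans ?_
    gcongr <;> rw [norm_mul]
    · exact mul_le_mul (hB v) (hwnorm v le_rfl) (norm_nonneg _) hB0
    · exact mul_le_mul (hB u) (hwnorm u huv) (norm_nonneg _) hB0
  refine h4.trans ?_
  rw [div_eq_mul_inv]
  have hn : (0:ℝ) ≤ ‖lam‖⁻¹ := inv_nonneg.2 (norm_nonneg _)
  nlinarith [hn, hC0, mul_nonneg hC0 hn]

lemma osc2 {h h' : ℝ → ℂ} (hd : ∀ t, HasDerivAt h (h' t) t) (hc' : Continuous h')
    {u v : ℝ} (huv : u ≤ v) {lam : ℂ} (hl : 0 ≤ lam.im) (hlam : lam ≠ 0)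
    {B C : ℝ} (hB : ∀ t, ‖h t‖ ≤ B) (hC : ∀ t, ‖h' t‖ ≤ C) :
    ‖∫ t in u..v, h t * Complex.exp (Complex.I * lam * ((t - u : ℝ) : ℂ))‖
      ≤ (2 * B + C * (v - u)) / ‖lam‖ := by
  set c := Complex.I * lam with hc
  have hc0 : c ≠ 0 := mul_ne_zero Complex.I_ne_zero hlam
  set e : ℝ → ℂ := fun t => Complex.exp (Complex.I * lam * ((t - u : ℝ) : ℂ)) with hedef
  set w : ℝ → ℂ := fun t => c⁻¹ * e t with hwdef
  have hde : ∀ t, HasDerivAt e (e t * c) t := by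
    intro t
    have h1 : HasDerivAt (fun t : ℝ => ((t - u : ℝ) : ℂ)) ((1 : ℝ) : ℂ) t :=
      (((hasDerivAt_id t).sub_const u).ofReal_comp)
    have h2 : HasDerivAt (fun t : ℝ => Complex.I * lam * ((t - u : ℝ) : ℂ)) c t := by
      simpa using h1.const_mul c
    exact h2.cexp
  have hdw : ∀ t, HasDerivAt w (e t) t := by
    intro t
    have := (hde t).const_mul c⁻¹
    have heq : c⁻¹ * (e t * c) = e t := by field_simp
    rw [heq] at this
    exact this
  have hibp := intervalIntegral.integral_mul_deriv_eq_deriv_mul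
    (u := h) (u' := h') (v := w) (v' := e)
    (fun t _ => hd t) (fun t _ => hdw t)
    (hc'.intervalIntegrable u v)
    ((Complex.continuous_exp.comp (by fun_prop)).intervalIntegrable u v)
  have hwnorm : ∀ t, u ≤ t → ‖w t‖ ≤ ‖lam‖⁻¹ := by
    intro t ht
    rw [hwdef]
    simp only [norm_mul, norm_inv]
    have h3 : ‖c‖ = ‖lam‖ := by rw [hc, norm_mul, Complex.norm_I, one_mul]
    rw [h3]
    exact mul_le_of_le_one_right (inv_nonneg.2 (norm_nonneg _)) (norm_exp_le_one hl (by linarith))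
  have hB0 : 0 ≤ B := (norm_nonneg _).trans (hB u)
  have hC0 : 0 ≤ C := (norm_nonneg _).trans (hC u)
  have hint : ‖∫ t in u..v, h' t * w t‖ ≤ C * ‖lam‖⁻¹ * (v - u) := by
    have := intervalIntegral.norm_integral_le_of_norm_le_const
      (C := C * ‖lam‖⁻¹) (f := fun t => h' t * w t) (a := u) (b := v) ?_
    · rwa [_root_.abs_of_nonneg (by linarith : (0:ℝ) ≤ v - u)] at this
    · intro t ht
      rw [Set.uIoc_of_le huv] at ht
      rw [norm_mul]
      exact mul_le_mul (hC t) (hwnorm t ht.1.le) (norm_nonneg _) hC0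
  rw [hibp]
  have h4 : ‖h v * w v - h u * w u - ∫ t in u..v, h' t * w t‖
      ≤ B * ‖lam‖⁻¹ + B * ‖lam‖⁻¹ + C * ‖lam‖⁻¹ * (v - u) := by
    refine (norm_sub_le _ _).trans ?_
    gcongr
    refine (norm_sub_le _ _).trans ?_
    gcongr <;> rw [norm_mul]
    · exact mul_le_mul (hB v) (hwnorm v huv) (norm_nonneg _) hB0
    · exact mul_le_mul (hB u) (hwnorm u le_rfl) (norm_nonneg _) hB0
  refine h4.trans ?_
  rw [div_eq_mul_inv]
  have hn : (0:ℝ) ≤ ‖lam‖⁻¹ := inv_nonneg.2 (norm_nonneg _)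
  nlinarith [hn, hC0, mul_nonneg hC0 hn]


lemma steklov {g : ℝ → ℂ} (hg : Continuous g) (hgs : HasCompactSupport g) {ε : ℝ} (hε : 0 < ε) :
    ∃ h h' : ℝ → ℂ, (∀ t, HasDerivAt h (h' t) t) ∧ Continuous h' ∧
      (∀ t, ‖h t - g t‖ ≤ ε) ∧ (∃ B, ∀ t, ‖h t‖ ≤ B) ∧ (∃ C, ∀ t, ‖h' t‖ ≤ C) := by
  -- uniform continuity
  have hz : Filter.Tendsto g (Filter.cocompact ℝ) (nhds 0) := by
    have h1 := hasCompactSupport_iff_eventuallyEq.1 hgs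
    rw [Filter.coclosedCompact_eq_cocompact] at h1
    exact Filter.Tendsto.congr' h1.symm tendsto_const_nhds
  have hu : UniformContinuous g := hg.uniformContinuous_of_tendsto_cocompact hz
  obtain ⟨δ, hδ0, hδ⟩ := Metric.uniformContinuous_iff.1 hu ε hε
  obtain ⟨B, hBg⟩ := hgs.exists_bound_of_continuous hg
  set d : ℝ := δ / 2 with hddef
  have hd0 : 0 < d := by positivity
  have hdC : ((d : ℂ)) ≠ 0 := Complex.ofReal_ne_zero.2 (ne_of_gt hd0)
  set G : ℝ → ℂ := fun y => ∫ y' in (0:ℝ)..y, g y' with hGdef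
  have hG : ∀ y, HasDerivAt G (g y) y := fun y =>
    intervalIntegral.integral_hasDerivAt_right (hg.intervalIntegrable _ _)
      (hg.stronglyMeasurable.stronglyMeasurableAtFilter) hg.continuousAt
  set h : ℝ → ℂ := fun t => (d : ℂ)⁻¹ * ∫ y in t..t + d, g y with hhdef
  set h' : ℝ → ℂ := fun t => (d : ℂ)⁻¹ * (g (t + d) - g t) with hh'def
  have hrepr : h = fun t => (d : ℂ)⁻¹ * (G (t + d) - G t) := by
    funext t
    rw [hhdef, hGdef]
    simp only []
    rw [intervalIntegral.integral_interval_sub_left (hg.intervalIntegrable _ _)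
      (hg.intervalIntegrable _ _)]
  have hder : ∀ t, HasDerivAt h (h' t) t := by
    intro t
    rw [hrepr]
    have h1 : HasDerivAt (fun t : ℝ => G (t + d)) (g (t + d)) t :=
      HasDerivAt.comp_add_const t d (hG (t + d))
    exact ((h1.sub (hG t)).const_mul _)
  have hcont' : Continuous h' := by
    rw [hh'def]
    fun_prop
  refine ⟨h, h', hder, hcont', ?_, ?_, ?_⟩
  · intro t
    have key : h t - g t = (d : ℂ)⁻¹ * ∫ y in t..t + d, (g y - g t) := by
      rw [intervalIntegral.integral_sub (hg.intervalIntegrable _ _) (intervalIntegrable_const),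
        intervalIntegral.integral_const]
      rw [hhdef]
      simp only []
      rw [mul_sub]
      congr 1
      rw [add_sub_cancel_left, Complex.real_smul, ← mul_assoc, inv_mul_cancel₀ hdC, one_mul]
    rw [key, norm_mul]
    have hb : ‖∫ y in t..t + d, (g y - g t)‖ ≤ ε * |t + d - t| := by
      refine intervalIntegral.norm_integral_le_of_norm_le_const fun y hy => ?_
      rw [Set.uIoc_of_le (by linarith)] at hy
      have : dist y t < δ := by
        rw [Real.dist_eq, _root_.abs_of_nonneg (by linarith [hy.1] : (0:ℝ) ≤ y - t)]
        linarith [hy.2]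
      exact le_of_lt (by simpa [dist_eq_norm] using hδ this)
    rw [add_sub_cancel_left, _root_.abs_of_nonneg hd0.le] at hb
    have hnd : ‖(d : ℂ)⁻¹‖ = d⁻¹ := by
      rw [norm_inv, Complex.norm_real, Real.norm_eq_abs, _root_.abs_of_nonneg hd0.le]
    rw [hnd]
    calc d⁻¹ * ‖∫ y in t..t + d, (g y - g t)‖ ≤ d⁻¹ * (ε * d) := by
          exact mul_le_mul_of_nonneg_left hb (inv_nonneg.2 hd0.le)
      _ = ε := by field_simp
  · refine ⟨B, fun t => ?_⟩
    rw [hhdef]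
    simp only []
    rw [norm_mul]
    have hnd : ‖(d : ℂ)⁻¹‖ = d⁻¹ := by
      rw [norm_inv, Complex.norm_real, Real.norm_eq_abs, _root_.abs_of_nonneg hd0.le]
    have hb : ‖∫ y in t..t + d, g y‖ ≤ B * |t + d - t| :=
      intervalIntegral.norm_integral_le_of_norm_le_const fun y _ => hBg y
    rw [add_sub_cancel_left, _root_.abs_of_nonneg hd0.le] at hb
    rw [hnd]
    calc d⁻¹ * ‖∫ y in t..t + d, g y‖ ≤ d⁻¹ * (B * d) :=
          mul_le_mul_of_nonneg_left hb (inv_nonneg.2 hd0.le)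
      _ = B := by field_simp
  · refine ⟨d⁻¹ * (2 * B), fun t => ?_⟩
    rw [hh'def]
    simp only []
    rw [norm_mul]
    have hnd : ‖(d : ℂ)⁻¹‖ = d⁻¹ := by
      rw [norm_inv, Complex.norm_real, Real.norm_eq_abs, _root_.abs_of_nonneg hd0.le]
    rw [hnd]
    refine mul_le_mul_of_nonneg_left ?_ (inv_nonneg.2 hd0.le)
    calc ‖g (t + d) - g t‖ ≤ ‖g (t + d)‖ + ‖g t‖ := norm_sub_le _ _
      _ ≤ 2 * B := by linarith [hBg (t + d), hBg t]


lemma exists_T {f : ℝ → ℂ} (hf1 : IntegrableOn f (Ici 0)) {ζ : ℝ} (hζ : 0 < ζ) :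
    ∃ T : ℝ, 0 ≤ T ∧ (∫ t in Ici T, ‖f t‖) ≤ ζ := by
  have hten : Filter.Tendsto (fun n : ℕ => ∫ t in Ici (n : ℝ), ‖f t‖) Filter.atTop
      (nhds (∫ t in ⋂ n : ℕ, Ici (n : ℝ), ‖f t‖)) := by
    refine tendsto_setIntegral_of_antitone (fun n => measurableSet_Ici) ?_ ?_
    · intro m n hmn
      exact Ici_subset_Ici.2 (by exact_mod_cast hmn)
    · exact ⟨0, by rw [Nat.cast_zero]; exact hf1.norm⟩
  have hempty : (⋂ n : ℕ, Ici ((n : ℝ))) = ∅ := by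
    ext y
    simp only [mem_iInter, mem_Ici, mem_empty_iff_false, iff_false, not_forall, not_le]
    obtain ⟨n, hn⟩ := exists_nat_gt y
    exact ⟨n, hn⟩
  rw [hempty] at hten
  simp only [Measure.restrict_empty, integral_zero_measure] at hten
  obtain ⟨n, hn⟩ := (hten.eventually (eventually_le_nhds hζ)).exists
  exact ⟨n, Nat.cast_nonneg n, hn⟩


-- generalized norm bound for integrable-on-interval integrands
lemma norm_intv_le' {g : ℝ → ℂ} {a b : ℝ} (hab : a ≤ b) (hg : IntegrableOn g (Icc a b))
    {φ : ℝ → ℂ} (hφ : Continuous φ) (hφ1 : ∀ t ∈ Ioc a b, ‖φ t‖ ≤ 1) :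
    ‖∫ t in a..b, g t * φ t‖ ≤ ∫ t in Ioc a b, ‖g t‖ := by
  rw [intervalIntegral.integral_of_le hab]
  refine (norm_integral_le_integral_norm _).trans ?_
  refine setIntegral_mono_on ?_ ((hg.mono_set Ioc_subset_Icc_self).norm) measurableSet_Ioc ?_
  · exact ((hg.mul_continuousOn hφ.continuousOn isCompact_Icc).mono_set Ioc_subset_Icc_self).norm
  · intro t ht
    rw [norm_mul]
    exact mul_le_of_le_one_right (norm_nonneg _) (hφ1 t ht)

lemma trunc_decay {f h h' : ℝ → ℂ} (hf1 : IntegrableOn f (Ici 0))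
    (hder : ∀ t, HasDerivAt h (h' t) t) (hc' : Continuous h')
    {T : ℝ} (hT : 0 ≤ T) {B C : ℝ} (hB : ∀ t, ‖h t‖ ≤ B) (hC : ∀ t, ‖h' t‖ ≤ C)
    {lam : ℂ} (hl : 0 ≤ lam.im) (hlam : lam ≠ 0)
    {s x : ℝ} (hs : s ∈ Icc (0:ℝ) T) (hx : x ∈ Icc (0:ℝ) T) :
    ‖Jint f s x lam‖ ≤ (∫ t in Ioc 0 T, ‖f t - h t‖) + (2 * B + C * T) / ‖lam‖ := by
  have hch : Continuous h := by
    rw [continuous_iff_continuousAt]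
    exact fun t => (hder t).differentiableAt.continuousAt
  have hC0 : 0 ≤ C := (norm_nonneg _).trans (hC 0)
  have hlampos : 0 < ‖lam‖ := norm_pos_iff.2 hlam
  have hsub : ∀ {u v : ℝ}, 0 ≤ u → v ≤ T → Ioc u v ⊆ Ioc 0 T := by
    intro u v hu hv t ht
    exact ⟨lt_of_le_of_lt hu ht.1, ht.2.trans hv⟩
  have hfh : IntegrableOn (fun t => f t - h t) (Icc 0 T) :=
    (hf1.mono_set (fun t ht => ht.1)).sub (hch.integrableOn_Icc)
  have happle : ∀ {u v : ℝ}, 0 ≤ u → u ≤ v → v ≤ T →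
      (∫ t in Ioc u v, ‖f t - h t‖) ≤ ∫ t in Ioc 0 T, ‖f t - h t‖ := by
    intro u v hu huv hv
    refine setIntegral_mono_set ((hfh.mono_set Ioc_subset_Icc_self).norm)
      (Filter.Eventually.of_forall fun t => norm_nonneg _)
      (HasSubset.Subset.eventuallyLE (hsub hu hv))
  rcases le_total s x with hsx | hxs
  · rw [Jint_eq_of_le f hsx lam]
    have hfsplit : (fun t => f t * Complex.exp (Complex.I * lam * ((x - t : ℝ) : ℂ)))
        = (fun t => (f t - h t) * Complex.exp (Complex.I * lam * ((x - t : ℝ) : ℂ))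
            + h t * Complex.exp (Complex.I * lam * ((x - t : ℝ) : ℂ))) := by
      funext t; ring
    rw [hfsplit]
    have i1 : IntervalIntegrable (fun t => (f t - h t) * Complex.exp (Complex.I * lam * ((x - t : ℝ) : ℂ))) MeasureTheory.volume s x := by
      rw [intervalIntegrable_iff_integrableOn_Ioc_of_le hsx]
      exact (((hfh.mono_set (fun t ht => ⟨hs.1.trans ht.1, ht.2.trans hx.2⟩)).mul_continuousOn
        (contSub lam x).continuousOn isCompact_Icc).mono_set Ioc_subset_Icc_self)
    have i2 : IntervalIntegrable (fun t => h t * Complex.exp (Complex.I * lam * ((x - t : ℝ) : ℂ))) MeasureTheory.volume s x :=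
      (hch.mul (contSub lam x)).intervalIntegrable s x
    rw [intervalIntegral.integral_add i1 i2]
    refine (norm_add_le _ _).trans ?_
    have part1 : ‖∫ t in s..x, (f t - h t) * Complex.exp (Complex.I * lam * ((x - t : ℝ) : ℂ))‖
        ≤ ∫ t in Ioc 0 T, ‖f t - h t‖ := by
      refine (norm_intv_le' hsx (hfh.mono_set (fun t ht => ⟨hs.1.trans ht.1, ht.2.trans hx.2⟩))
        (contSub lam x) (fun t ht => norm_exp_le_one hl (by linarith [ht.2]))).trans ?_
      exact happle hs.1 hsx hx.2
    have part2 : ‖∫ t in s..x, h t * Complex.exp (Complex.I * lam * ((x - t : ℝ) : ℂ))‖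
        ≤ (2 * B + C * T) / ‖lam‖ := by
      refine (osc1 hder hc' hsx hl hlam hB hC).trans ?_
      have hxs' : x - s ≤ T := by linarith [hs.1, hx.2]
      gcongr
    linarith
  · rw [Jint_eq_of_ge f hxs lam]
    have hfsplit : (fun t => f t * Complex.exp (Complex.I * lam * ((t - x : ℝ) : ℂ)))
        = (fun t => (f t - h t) * Complex.exp (Complex.I * lam * ((t - x : ℝ) : ℂ))
            + h t * Complex.exp (Complex.I * lam * ((t - x : ℝ) : ℂ))) := by
      funext t; ring
    rw [hfsplit]
    have i1 : IntervalIntegrable (fun t => (f t - h t) * Complex.exp (Complex.I * lam * ((t - x : ℝ) : ℂ))) MeasureTheory.volume x s := by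
      rw [intervalIntegrable_iff_integrableOn_Ioc_of_le hxs]
      exact (((hfh.mono_set (fun t ht => ⟨hx.1.trans ht.1, ht.2.trans hs.2⟩)).mul_continuousOn
        (contSub' lam x).continuousOn isCompact_Icc).mono_set Ioc_subset_Icc_self)
    have i2 : IntervalIntegrable (fun t => h t * Complex.exp (Complex.I * lam * ((t - x : ℝ) : ℂ))) MeasureTheory.volume x s :=
      (hch.mul (contSub' lam x)).intervalIntegrable x s
    rw [intervalIntegral.integral_add i1 i2]
    refine (norm_add_le _ _).trans ?_
    have part1 : ‖∫ t in x..s, (f t - h t) * Complex.exp (Complex.I * lam * ((t - x : ℝ) : ℂ))‖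
        ≤ ∫ t in Ioc 0 T, ‖f t - h t‖ := by
      refine (norm_intv_le' hxs (hfh.mono_set (fun t ht => ⟨hx.1.trans ht.1, ht.2.trans hs.2⟩))
        (contSub' lam x) (fun t ht => norm_exp_le_one hl (by linarith [ht.1]))).trans ?_
      exact happle hx.1 hxs hs.2
    have part2 : ‖∫ t in x..s, h t * Complex.exp (Complex.I * lam * ((t - x : ℝ) : ℂ))‖
        ≤ (2 * B + C * T) / ‖lam‖ := by
      refine (osc2 hder hc' hxs hl hlam hB hC).trans ?_
      have hxs' : s - x ≤ T := by linarith [hx.1, hs.2]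
      gcongr
    linarith



theorem stmt5 (f : ℝ → ℂ) (hf1 : IntegrableOn f (Ici 0))
    (Ψ : ℂ → ℝ)
    (hΨ : ∀ lam : ℂ, Ψ lam =
      ⨆ x : Ici (0 : ℝ), ⨆ s : Ici (0 : ℝ),
        ‖∫ t in min s.1 x.1..max s.1 x.1,
          f t * Complex.exp (Complex.I * lam * |x.1 - t|)‖) :
    UniformContinuousOn Ψ {lam : ℂ | 0 ≤ lam.im} ∧
    (∀ ε > 0, ∃ R : ℝ, ∀ lam : ℂ, 0 ≤ lam.im → R ≤ ‖lam‖ → Ψ lam ≤ ε) := by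
  haveI : Nonempty ↥(Ici (0:ℝ)) := ⟨⟨0, Set.self_mem_Ici⟩⟩
  set M : ℝ := ∫ t in Ici (0:ℝ), ‖f t‖ with hMdef
  have hM0 : 0 ≤ M := integral_nonneg fun t => norm_nonneg _
  have hΨ' : ∀ lam : ℂ, Ψ lam = ⨆ x : Ici (0:ℝ), ⨆ s : Ici (0:ℝ), ‖Jint f s.1 x.1 lam‖ := by
    intro lam
    rw [hΨ lam]
    simp only [Jint]
  have hPsi_le : ∀ (lam : ℂ) (c : ℝ),
      (∀ s x : ℝ, 0 ≤ s → 0 ≤ x → ‖Jint f s x lam‖ ≤ c) → Ψ lam ≤ c := by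
    intro lam c hc
    rw [hΨ' lam]
    exact ciSup_le fun x => ciSup_le fun s => hc s.1 x.1 s.2 x.2
  have hle_Psi : ∀ (lam : ℂ), 0 ≤ lam.im → ∀ (s x : ℝ), 0 ≤ s → 0 ≤ x →
      ‖Jint f s x lam‖ ≤ Ψ lam := by
    intro lam hl s x hs hx
    rw [hΨ' lam]
    have hbdd1 : ∀ x' : Ici (0:ℝ),
        BddAbove (range fun s' : Ici (0:ℝ) => ‖Jint f s'.1 x'.1 lam‖) := by
      intro x'
      refine ⟨M, ?_⟩
      rintro y ⟨s', rfl⟩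
      exact norm_Jint_le_M hf1 s'.2 x'.2 hl
    have hbdd2 : BddAbove (range fun x' : Ici (0:ℝ) =>
        ⨆ s' : Ici (0:ℝ), ‖Jint f s'.1 x'.1 lam‖) := by
      refine ⟨M, ?_⟩
      rintro y ⟨x', rfl⟩
      exact ciSup_le fun s' => norm_Jint_le_M hf1 s'.2 x'.2 hl
    have h1 : ‖Jint f s x lam‖ ≤ ⨆ s' : Ici (0:ℝ), ‖Jint f s'.1 x lam‖ :=
      le_ciSup (hbdd1 ⟨x, hx⟩) (⟨s, hs⟩ : Ici (0:ℝ))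
    exact h1.trans (le_ciSup hbdd2 (⟨x, hx⟩ : Ici (0:ℝ)))
  constructor
  · -- uniform continuity
    rw [Metric.uniformContinuousOn_iff]
    intro ε hε
    obtain ⟨T, hT0, hTail⟩ := exists_T hf1 (show (0:ℝ) < ε/3 by linarith)
    refine ⟨ε/3 / (M*T + 1), by positivity, ?_⟩
    intro lam hlam mu hmu hdist
    simp only [mem_setOf_eq] at hlam hmu
    have key : ∀ (l m : ℂ), 0 ≤ l.im → 0 ≤ m.im → dist l m < ε/3 / (M*T + 1) →
        Ψ l ≤ Ψ m + (ε/3 + ε/3) := by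
      intro l m hl hm hd
      have hpos : (0:ℝ) < M*T + 1 := by positivity
      have hdterm : M * (T * dist l m) ≤ ε/3 := by
        have h1 : M * T * dist l m ≤ M * T * (ε/3 / (M*T + 1)) :=
          mul_le_mul_of_nonneg_left hd.le (mul_nonneg hM0 hT0)
        have h2 : M * T * (ε/3 / (M*T + 1)) ≤ ε/3 := by
          rw [mul_div_assoc']
          rw [div_le_iff₀ hpos]
          nlinarith [mul_nonneg hM0 hT0]
        calc M * (T * dist l m) = M * T * dist l m := by ring
          _ ≤ _ := h1.trans h2
      refine hPsi_le l (Ψ m + (ε/3 + ε/3)) ?_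
      intro s x hs hx
      have hmem_s : min s T ∈ Icc (0:ℝ) T := ⟨le_min hs hT0, min_le_right _ _⟩
      have hmem_x : min x T ∈ Icc (0:ℝ) T := ⟨le_min hx hT0, min_le_right _ _⟩
      have step1 : ‖Jint f s x l‖ ≤ (∫ t in Ici T, ‖f t‖) + ‖Jint f (min s T) (min x T) l‖ :=
        trunc_key hf1 hT0 hs hx hl
      have step2 : ‖Jint f (min s T) (min x T) l‖
          ≤ ‖Jint f (min s T) (min x T) m‖ + ‖Jint f (min s T) (min x T) l - Jint f (min s T) (min x T) m‖ := by
        have := norm_add_le (Jint f (min s T) (min x T) l - Jint f (min s T) (min x T) m)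
          (Jint f (min s T) (min x T) m)
        simpa [add_comm] using this
      have step3 : ‖Jint f (min s T) (min x T) l - Jint f (min s T) (min x T) m‖
          ≤ M * (T * dist l m) := Jdiff hf1 hmem_s hmem_x hl hm
      have step4 : ‖Jint f (min s T) (min x T) m‖ ≤ Ψ m :=
        hle_Psi m hm _ _ hmem_s.1 hmem_x.1
      linarith
    rw [Real.dist_eq, abs_sub_lt_iff]
    have k1 := key lam mu hlam hmu hdist
    have k2 := key mu lam hmu hlam (by rwa [dist_comm])
    constructor <;> linarith
  · -- decay at infinity
    intro ε hε
    obtain ⟨T, hT0, hTail⟩ := exists_T hf1 (show (0:ℝ) < ε/4 by linarith)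
    set F : ℝ → ℂ := (Ici (0:ℝ)).indicator f with hFdef
    have hF : Integrable F := by
      rw [hFdef, integrable_indicator_iff measurableSet_Ici]
      exact hf1
    obtain ⟨g, hgsupp, hgapp, hgcont, hgInt⟩ :=
      hF.exists_hasCompactSupport_integral_sub_le (show (0:ℝ) < ε/4 by linarith)
    have hε2 : (0:ℝ) < ε / (4 * (T + 1)) := by positivity
    obtain ⟨h, h', hder, hc', happ, ⟨B, hB⟩, ⟨C, hC⟩⟩ := steklov hgcont hgsupp hε2
    have hch : Continuous h := by
      rw [continuous_iff_continuousAt]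
      exact fun t => (hder t).differentiableAt.continuousAt
    have hB0 : 0 ≤ B := (norm_nonneg _).trans (hB 0)
    have hC0 : 0 ≤ C := (norm_nonneg _).trans (hC 0)
    -- approximation bound on [0, T]
    have happrox : (∫ t in Ioc (0:ℝ) T, ‖f t - h t‖) ≤ ε/4 + ε/4 := by
      have hint1 : IntegrableOn (fun t => ‖f t - h t‖) (Ioc (0:ℝ) T) := by
        have h0 : IntegrableOn (fun t => f t - h t) (Ioc (0:ℝ) T) :=
          (hf1.mono_set (fun t ht => ht.1.le)).sub
            ((hch.integrableOn_Icc).mono_set Ioc_subset_Icc_self)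
        exact h0.norm
      have hint2 : IntegrableOn (fun t => ‖F t - g t‖ + ‖g t - h t‖) (Ioc (0:ℝ) T) := by
        have ha : IntegrableOn (fun t => ‖F t - g t‖) (Ioc (0:ℝ) T) :=
          ((hF.sub hgInt).norm).integrableOn
        have hb : IntegrableOn (fun t => ‖g t - h t‖) (Ioc (0:ℝ) T) :=
          (((hgcont.sub hch).norm).integrableOn_Icc).mono_set Ioc_subset_Icc_self
        exact ha.add hb
      have hmono : (∫ t in Ioc (0:ℝ) T, ‖f t - h t‖)
          ≤ ∫ t in Ioc (0:ℝ) T, (‖F t - g t‖ + ‖g t - h t‖) := by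
        refine setIntegral_mono_on hint1 hint2 measurableSet_Ioc ?_
        intro t ht
        have hfF : f t = F t := by
          rw [hFdef, indicator_of_mem (show t ∈ Ici (0:ℝ) from ht.1.le)]
        calc ‖f t - h t‖ = ‖(F t - g t) + (g t - h t)‖ := by rw [← hfF]; ring_nf
          _ ≤ ‖F t - g t‖ + ‖g t - h t‖ := norm_add_le _ _
      have hsplit : (∫ t in Ioc (0:ℝ) T, (‖F t - g t‖ + ‖g t - h t‖))
          = (∫ t in Ioc (0:ℝ) T, ‖F t - g t‖) + ∫ t in Ioc (0:ℝ) T, ‖g t - h t‖ := by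
        refine integral_add ?_ ?_
        · exact ((hF.sub hgInt).norm).integrableOn
        · exact (((hgcont.sub hch).norm).integrableOn_Icc).mono_set Ioc_subset_Icc_self
      have hb1 : (∫ t in Ioc (0:ℝ) T, ‖F t - g t‖) ≤ ε/4 := by
        refine (setIntegral_le_integral ((hF.sub hgInt).norm)
          (Filter.Eventually.of_forall fun t => norm_nonneg _)).trans ?_
        exact hgapp
      have hb2 : (∫ t in Ioc (0:ℝ) T, ‖g t - h t‖) ≤ ε/4 := by
        have hptw : ∀ t ∈ Ioc (0:ℝ) T, ‖g t - h t‖ ≤ ε / (4 * (T + 1)) := by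
          intro t _
          rw [norm_sub_rev]
          exact happ t
        have hc2 : (∫ t in Ioc (0:ℝ) T, ‖g t - h t‖)
            ≤ ∫ _t in Ioc (0:ℝ) T, ε / (4 * (T + 1)) := by
          refine setIntegral_mono_on ?_ (integrableOn_const ?_) measurableSet_Ioc hptw
          · exact (((hgcont.sub hch).norm).integrableOn_Icc).mono_set Ioc_subset_Icc_self
          · rw [Real.volume_Ioc]
            exact ENNReal.ofReal_ne_top
        have hc3 : (∫ _t in Ioc (0:ℝ) T, ε / (4 * (T + 1))) = T * (ε / (4 * (T + 1))) := by
          rw [setIntegral_const, Real.volume_real_Ioc, max_eq_left (by linarith), smul_eq_mul,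
            sub_zero]
        have hc4 : T * (ε / (4 * (T + 1))) ≤ ε/4 := by
          rw [mul_div_assoc']
          rw [div_le_div_iff₀ (by positivity) (by norm_num)]
          nlinarith
        linarith
      linarith
    set R : ℝ := max 1 ((2 * B + C * T) / (ε/4)) with hRdef
    refine ⟨R, ?_⟩
    intro lam hl hR
    have h1lam : (1:ℝ) ≤ ‖lam‖ := le_trans (le_max_left _ _) hR
    have hlam0 : lam ≠ 0 := by
      intro hcon
      rw [hcon] at h1lam
      simp only [norm_zero] at h1lam
      linarith
    have hoscb : (2 * B + C * T) / ‖lam‖ ≤ ε/4 := by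
      rw [div_le_iff₀ (by linarith)]
      have h2 : (2 * B + C * T) / (ε/4) ≤ ‖lam‖ := le_trans (le_max_right _ _) hR
      rw [div_le_iff₀ (by positivity)] at h2
      nlinarith
    refine hPsi_le lam ε ?_
    intro s x hs hx
    have hmem_s : min s T ∈ Icc (0:ℝ) T := ⟨le_min hs hT0, min_le_right _ _⟩
    have hmem_x : min x T ∈ Icc (0:ℝ) T := ⟨le_min hx hT0, min_le_right _ _⟩
    have step1 : ‖Jint f s x lam‖ ≤ (∫ t in Ici T, ‖f t‖) + ‖Jint f (min s T) (min x T) lam‖ :=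
      trunc_key hf1 hT0 hs hx hl
    have step2 : ‖Jint f (min s T) (min x T) lam‖
        ≤ (∫ t in Ioc 0 T, ‖f t - h t‖) + (2 * B + C * T) / ‖lam‖ :=
      trunc_decay hf1 hder hc' hT0 hB hC hl hlam0 hmem_s hmem_x
    linarith
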